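/- If a topological space X is I-favorable, then X has a club filter all of whose elements are closed under finite intersections. -/

import Mathlib

open Set TopologicalSpace

variable (X : Type*) [TopologicalSpace X]

/-- A valid move of Player I: a finite family of nonempty open sets. -/
def IMove (A : Set (Set X)) : Prop :=
  A.Finite ∧ ∀ U ∈ A, IsOpen U ∧ U.Nonempty

/-- A valid response of Player II to the family `A`: a finite family of nonempty
open sets such that every member of `A` contains some member of `B`. -/
def IIMove (A B : Set (Set X)) : Prop :=
  IMove X B ∧ ∀ U ∈ A, ∃ V ∈ B, V ⊆ U

/-- `X` is I-favorable: Player I has a winning strategy in the finite open-open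
game. A strategy is a function from histories of Player II's moves to the next
move of Player I; it is winning if for every play in which Player II always
responds validly, each tail union of Player II's families is dense. -/
def IFavorable : Prop :=
  ∃ σ : List (Set (Set X)) → Set (Set X),
    (∀ hist, IMove X (σ hist)) ∧
    ∀ B : ℕ → Set (Set X),
      (∀ n, IIMove X (σ ((List.range n).map B)) (B n)) →
      ∀ k, Dense (⋃ (n : ℕ) (_ : k ≤ n), ⋃₀ B n)

/-- Player II has a winning strategy in the finite open-open game: a function
from histories of Player I's moves to responses of Player II which are valid,
and such that whenever Player I plays validly, some tail union of Player II's
families fails to be dense. -/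
def IIFavorable : Prop :=
  ∃ τ : List (Set (Set X)) → Set (Set X),
    ∀ A : ℕ → Set (Set X), (∀ n, IMove X (A n)) →
      (∀ n, IIMove X (A n) (τ ((List.range (n + 1)).map A))) ∧
      ∃ k, ¬ Dense (⋃ (n : ℕ) (_ : k ≤ n), ⋃₀ τ ((List.range (n + 1)).map A))

/-- `Q` is a π-base for `X`: a family of nonempty open sets such that every
nonempty open set contains a member of the family. -/
def IsPiBase (Q : Set (Set X)) : Prop :=
  (∀ U ∈ Q, IsOpen U ∧ U.Nonempty) ∧
  ∀ V : Set X, IsOpen V → V.Nonempty → ∃ U ∈ Q, U ⊆ V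

/-- `C` is a club filter with respect to the π-base `Q`. -/
def IsClubFilter (Q : Set (Set X)) (C : Set (Set (Set X))) : Prop :=
  (∀ P ∈ C, P.Countable ∧ P ⊆ Q) ∧
  (∀ P : ℕ → Set (Set X), (∀ n, P n ∈ C) → Monotone P → (⋃ n, P n) ∈ C) ∧
  (∀ A : Set (Set X), A.Countable → A ⊆ Q → ∃ P ∈ C, A ⊆ P) ∧
  (∀ V : Set X, IsOpen V → V.Nonempty →
    ∀ P ∈ C, ∃ W ∈ P, ∀ U ∈ P, U ⊆ W → (U ∩ V).Nonempty)


open Set TopologicalSpace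

private lemma exists_subset_of_finite_mono {α : Type*} {t : Set α} (ht : t.Finite)
    {P : ℕ → Set α} (hm : Monotone P) (h : t ⊆ ⋃ n, P n) : ∃ n, t ⊆ P n := by
  refine Set.Finite.induction_on (motive := fun s _ => s ⊆ (⋃ n, P n) → ∃ n, s ⊆ P n) t ht
    (fun _ => ⟨0, empty_subset _⟩) ?_ h
  intro a s _ _ ih hsub
  obtain ⟨n, hn⟩ := ih (subset_trans (subset_insert a s) hsub)
  obtain ⟨m, hm'⟩ := mem_iUnion.1 (hsub (mem_insert a s))
  exact ⟨max n m, insert_subset (hm (le_max_right n m) hm') (hn.trans (hm (le_max_left n m)))⟩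

private lemma exists_subset_of_list_mono {α : Type*} {P : ℕ → Set (Set α)} (hm : Monotone P)
    (L : List (Set (Set α))) (h : ∀ B ∈ L, B ⊆ ⋃ n, P n ∧ B.Finite) :
    ∃ n, ∀ B ∈ L, B ⊆ P n := by
  induction L with
  | nil => exact ⟨0, by simp⟩
  | cons a l ih =>
    obtain ⟨n, hn⟩ := ih (fun B hB => h B (List.mem_cons_of_mem a hB))
    obtain ⟨m, hma⟩ := exists_subset_of_finite_mono (h a List.mem_cons_self).2 hm
      (h a List.mem_cons_self).1
    refine ⟨max n m, fun B hB => ?_⟩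
    rcases List.mem_cons.1 hB with rfl | hB
    · exact hma.trans (hm (le_max_right n m))
    · exact (hn B hB).trans (hm (le_max_left n m))

private noncomputable def playHist {X : Type*} (f g : Set X → Set X)
    (σ : List (Set (Set X)) → Set (Set X)) : ℕ → List (Set (Set X))
  | 0 => []
  | n + 1 => playHist f g σ n ++ [g '' (f '' σ (playHist f g σ n))]

private lemma playHist_eq {X : Type*} (f g : Set X → Set X)
    (σ : List (Set (Set X)) → Set (Set X)) (n : ℕ) :
    (List.range n).map (fun k => g '' (f '' σ (playHist f g σ k))) = playHist f g σ n := by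
  induction n with
  | zero => rfl
  | succ n ih => rw [List.range_succ, List.map_append, ih]; rfl

/-- If a topological space is I-favorable, then (with respect to any π-base
closed under finite intersections) it has a club filter all of whose elements
are closed under finite intersections. -/
theorem clubFilter_of_iFavorable (X : Type*) [TopologicalSpace X]
    (hX : IFavorable X) (Q : Set (Set X)) (hQ : IsPiBase X Q)
    (hQinter : ∀ U ∈ Q, ∀ V ∈ Q, (U ∩ V).Nonempty → U ∩ V ∈ Q) :
    ∃ C : Set (Set (Set X)), IsClubFilter X Q C ∧
      ∀ P ∈ C, ∀ U ∈ P, ∀ V ∈ P, (U ∩ V).Nonempty → U ∩ V ∈ P := by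
  classical
  obtain ⟨σ, hσI, hσwin⟩ := hX
  -- a choice function refining nonempty open sets into Q
  have fex : ∀ U : Set X, ∃ W : Set X, (IsOpen U ∧ U.Nonempty) → W ∈ Q ∧ W ⊆ U := by
    intro U
    by_cases h : IsOpen U ∧ U.Nonempty
    · obtain ⟨W, hW, hsub⟩ := hQ.2 U h.1 h.2
      exact ⟨W, fun _ => ⟨hW, hsub⟩⟩
    · exact ⟨U, fun h' => absurd h' h⟩
  choose f hf using fex
  -- the Q-refinement of the strategy's answer lands in Q
  have hfQ : ∀ hist, f '' σ hist ⊆ Q := by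
    intro hist W hW
    obtain ⟨U, hU, rfl⟩ := hW
    exact (hf U ((hσI hist).2 U hU)).1
  refine ⟨{P | P.Countable ∧ P ⊆ Q ∧ (∀ U ∈ P, ∀ V ∈ P, (U ∩ V).Nonempty → U ∩ V ∈ P) ∧
      ∀ L : List (Set (Set X)), (∀ B ∈ L, B ⊆ P ∧ B.Finite) → f '' σ L ⊆ P},
    ⟨?_, ?_, ?_, ?_⟩, ?_⟩
  · exact fun P hP => ⟨hP.1, hP.2.1⟩
  · -- closure under monotone unions
    rintro P hP hmono
    refine ⟨countable_iUnion fun n => (hP n).1, iUnion_subset fun n => (hP n).2.1, ?_, ?_⟩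
    · intro U hU V hV hne
      obtain ⟨n, hUn⟩ := mem_iUnion.1 hU
      obtain ⟨m, hVm⟩ := mem_iUnion.1 hV
      exact mem_iUnion.2 ⟨max n m, (hP (max n m)).2.2.1 U (hmono (le_max_left n m) hUn) V
        (hmono (le_max_right n m) hVm) hne⟩
    · intro L hL
      obtain ⟨n, hn⟩ := exists_subset_of_list_mono hmono L hL
      refine subset_trans ((hP n).2.2.2 L fun B hB => ⟨hn B hB, (hL B hB).2⟩) (subset_iUnion _ n)
  · -- closing off a countable family
    intro A hA hAQ
    set step : Set (Set X) → Set (Set X) := fun P =>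
      (P ∪ (image2 (· ∩ ·) P P ∩ Q)) ∪
        ⋃ (L : List {t : Set (Set X) // t ⊆ P ∧ t.Finite}), f '' σ (L.map Subtype.val) with hstep
    have hsub_step : ∀ P, P ⊆ step P := fun P => (subset_union_left).trans subset_union_left
    have hstep_inv : ∀ P : Set (Set X), P.Countable → P ⊆ Q →
        (step P).Countable ∧ step P ⊆ Q := by
      intro P hPc hPQ
      have hS : Countable {t : Set (Set X) // t ⊆ P ∧ t.Finite} := by
        have hc : ({t : Set (Set X) | t.Finite ∧ t ⊆ P}).Countable :=
          Set.countable_setOf_finite_subset hPc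
        have hc' : ({t : Set (Set X) | t ⊆ P ∧ t.Finite}).Countable := by
          convert hc using 1
          ext t
          simp only [Set.mem_setOf_eq]
          tauto
        exact hc'.to_subtype
      constructor
      · refine Countable.union (Countable.union hPc ?_) ?_
        · exact ((hPc.image2 hPc _)).mono inter_subset_left
        · exact countable_iUnion fun L => ((hσI _).1.image f).countable
      · refine union_subset (union_subset hPQ ?_) ?_
        · intro W hW
          exact hW.2
        · exact iUnion_subset fun L => hfQ _
    set Pseq : ℕ → Set (Set X) := fun n => step^[n] A with hPseq
    have hPsucc : ∀ n, Pseq (n + 1) = step (Pseq n) := by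
      intro n; simp [hPseq, Function.iterate_succ_apply']
    have hmono : Monotone Pseq :=
      monotone_nat_of_le_succ fun n => by rw [hPsucc]; exact hsub_step _
    have hinv : ∀ n, (Pseq n).Countable ∧ Pseq n ⊆ Q := by
      intro n
      induction n with
      | zero => exact ⟨hA, hAQ⟩
      | succ n ih => rw [hPsucc]; exact hstep_inv _ ih.1 ih.2
    refine ⟨⋃ n, Pseq n, ⟨countable_iUnion fun n => (hinv n).1,
      iUnion_subset fun n => (hinv n).2, ?_, ?_⟩, (subset_iUnion Pseq 0)⟩
    · intro U hU V hV hne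
      obtain ⟨n, hUn⟩ := mem_iUnion.1 hU
      obtain ⟨m, hVm⟩ := mem_iUnion.1 hV
      have hU' := hmono (le_max_left n m) hUn
      have hV' := hmono (le_max_right n m) hVm
      refine mem_iUnion.2 ⟨max n m + 1, ?_⟩
      rw [hPsucc]
      refine Or.inl (Or.inr ⟨mem_image2_of_mem hU' hV',
        hQinter U ((hinv _).2 hU') V ((hinv _).2 hV') hne⟩)
    · intro L hL
      obtain ⟨n, hn⟩ := exists_subset_of_list_mono hmono L hL
      refine subset_trans ?_ (subset_iUnion Pseq (n + 1))
      rw [hPsucc]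
      refine subset_trans ?_ subset_union_right
      have : L = (L.attach.map fun b =>
          (⟨b.1, hn b.1 b.2, (hL b.1 b.2).2⟩ : {t : Set (Set X) // t ⊆ Pseq n ∧ t.Finite})).map
          Subtype.val := by
        rw [List.map_map]
        exact (List.attach_map_subtype_val L).symm ▸ rfl
      rw [this]
      exact subset_iUnion_of_subset _ (subset_refl _)
  · -- the hard condition: density witnesses via the winning strategy
    intro V hV hVne P hP
    by_contra hcon
    push_neg at hcon
    have hcon' : ∀ W ∈ P, ∃ U, U ∈ P ∧ U ⊆ W ∧ U ∩ V = ∅ := by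
      intro W hW
      obtain ⟨U, hU, hUW, hUV⟩ := hcon W hW
      exact ⟨U, hU, hUW, hUV⟩
    have gex : ∀ W : Set X, ∃ U : Set X, W ∈ P → U ∈ P ∧ U ⊆ W ∧ U ∩ V = ∅ := by
      intro W
      by_cases h : W ∈ P
      · obtain ⟨U, hU⟩ := hcon' W h; exact ⟨U, fun _ => hU⟩
      · exact ⟨W, fun h' => absurd h' h⟩
    choose g hg using gex
    set B : ℕ → Set (Set X) := fun n => g '' (f '' σ (playHist f g σ n)) with hB
    have histinv : ∀ n, ∀ B' ∈ playHist f g σ n, B' ⊆ P ∧ B'.Finite := by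
      intro n
      induction n with
      | zero => intro B' hB'; simp [playHist] at hB'
      | succ n ih =>
        intro B' hB'
        rw [playHist, List.mem_append, List.mem_singleton] at hB'
        rcases hB' with hB' | rfl
        · exact ih B' hB'
        · have hfP : f '' σ (playHist f g σ n) ⊆ P := hP.2.2.2 _ ih
          constructor
          · rintro _ ⟨W, hW, rfl⟩
            exact (hg W (hfP hW)).1
          · exact (((hσI _).1.image f).image g)
    have hBP : ∀ n, B n ⊆ P := by
      rintro n _ ⟨W, hW, rfl⟩
      exact (hg W (hP.2.2.2 _ (histinv n) hW)).1
    have hBrange : ∀ n, (List.range n).map B = playHist f g σ n := fun n => playHist_eq f g σ n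
    have hplays : ∀ n, IIMove X (σ ((List.range n).map B)) (B n) := by
      intro n
      rw [hBrange]
      refine ⟨⟨((hσI _).1.image f).image g, fun U hU => hQ.1 U (hP.2.1 (hBP n hU))⟩, ?_⟩
      intro U hU
      have hfU := hf U ((hσI (playHist f g σ n)).2 U hU)
      have hfUP : f U ∈ P := hP.2.2.2 _ (histinv n) (mem_image_of_mem f hU)
      exact ⟨g (f U), mem_image_of_mem g (mem_image_of_mem f hU),
        ((hg (f U) hfUP).2.1).trans hfU.2⟩
    have hdense := hσwin B hplays 0
    obtain ⟨x, hx⟩ := hVne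
    have hsub : (⋃ (n : ℕ) (_ : 0 ≤ n), ⋃₀ B n) ⊆ Vᶜ := by
      refine iUnion_subset fun n => iUnion_subset fun _ => sUnion_subset ?_
      rintro _ ⟨W, hW, rfl⟩
      have hWP : W ∈ P := hP.2.2.2 _ (histinv n) hW
      intro y hy hyV
      exact Set.eq_empty_iff_forall_notMem.1 (hg W hWP).2.2 y ⟨hy, hyV⟩
    have hclos : closure (⋃ (n : ℕ) (_ : 0 ≤ n), ⋃₀ B n) ⊆ Vᶜ :=
      closure_minimal hsub (isClosed_compl_iff.2 hV)
    exact hclos (hdense x) hx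
  · exact fun P hP => hP.2.2.1
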